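/- Let four points p, p₁, q, p₂ lie on a common circle in this cyclic order. Then |p - q| · |p₁ - p₂| = |p₁ - q| · |p - p₂| + |p₂ - q| · |p - p₁| (Ptolemy's equality for a cyclic quadrilateral). -/

import Mathlib

open Real Complex


lemma chord_abs (α β : ℝ) :
    ‖(Complex.exp (α * Complex.I) - Complex.exp (β * Complex.I))‖
      = 2 * |Real.sin ((α - β) / 2)| := by
  set s : ℝ := (α + β) / 2
  set d : ℝ := (α - β) / 2
  have hx : Complex.exp ((d : ℂ) * Complex.I) - Complex.exp (-((d : ℂ) * Complex.I))
      = 2 * Real.sin d * Complex.I := by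
    rw [Complex.exp_mul_I,
      show -((d : ℂ) * Complex.I) = ((-d : ℝ) : ℂ) * Complex.I by push_cast; ring,
      Complex.exp_mul_I]
    push_cast
    rw [Complex.cos_neg, Complex.sin_neg]
    ring
  have h : Complex.exp (α * Complex.I) - Complex.exp (β * Complex.I)
      = Complex.exp ((s : ℂ) * Complex.I) *
        (Complex.exp ((d : ℂ) * Complex.I) - Complex.exp (-((d : ℂ) * Complex.I))) := by
    rw [mul_sub, ← Complex.exp_add, ← Complex.exp_add]
    congr 2 <;> · push_cast [s, d]; ring
  rw [h, hx, norm_mul, Complex.norm_exp_ofReal_mul_I, one_mul,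
    show (2 * (Real.sin d : ℂ) * Complex.I) = ((2 * Real.sin d : ℝ) : ℂ) * Complex.I by
      push_cast; ring,
    norm_mul, Complex.norm_real, Real.norm_eq_abs, Complex.norm_I, mul_one, abs_mul]
  norm_num

lemma dist_circle (o : ℂ) (R : ℝ) (hR : 0 ≤ R) (α β : ℝ)
    (h0 : 0 ≤ (β - α) / 2) (hπ : (β - α) / 2 ≤ π) :
    dist (o + R * Complex.exp (α * Complex.I)) (o + R * Complex.exp (β * Complex.I))
      = 2 * R * Real.sin ((β - α) / 2) := by
  rw [Complex.dist_eq,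
    show o + (R : ℂ) * Complex.exp (α * Complex.I) - (o + R * Complex.exp (β * Complex.I))
      = (R : ℂ) * (Complex.exp (α * Complex.I) - Complex.exp (β * Complex.I)) by ring,
    norm_mul, Complex.norm_real, Real.norm_eq_abs, chord_abs,
    show (α - β) / 2 = -((β - α) / 2) by ring, Real.sin_neg, abs_neg,
    _root_.abs_of_nonneg (Real.sin_nonneg_of_nonneg_of_le_pi h0 hπ), _root_.abs_of_nonneg hR]
  ring

/-- Ptolemy's equality for a cyclic quadrilateral `p p₁ q p₂`:
the four points lie on a common circle (center `o`, radius `R`) in this cyclic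
order, encoded by strictly increasing angular parameters within one turn. -/
theorem ptolemy_cyclic (o : ℂ) (R : ℝ) (hR : 0 < R) (θ θ₁ θq θ₂ : ℝ)
    (h₁ : θ < θ₁) (h₂ : θ₁ < θq) (h₃ : θq < θ₂) (h₄ : θ₂ < θ + 2 * π)
    (p p₁ q p₂ : ℂ)
    (hp : p = o + R * Complex.exp (θ * Complex.I))
    (hp₁ : p₁ = o + R * Complex.exp (θ₁ * Complex.I))
    (hq : q = o + R * Complex.exp (θq * Complex.I))
    (hp₂ : p₂ = o + R * Complex.exp (θ₂ * Complex.I)) :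
    dist p q * dist p₁ p₂ = dist p₁ q * dist p p₂ + dist p₂ q * dist p p₁ := by
  have hπ := Real.pi_pos
  subst hp hp₁ hq hp₂
  have hsym : ∀ a b : ℂ, dist a b = dist b a := fun a b => dist_comm a b
  have e1 : dist (o + (R:ℂ) * Complex.exp (θ * Complex.I))
      (o + R * Complex.exp (θq * Complex.I)) = 2 * R * Real.sin ((θq - θ) / 2) :=
    dist_circle o R hR.le θ θq (by linarith) (by linarith)
  have e2 : dist (o + (R:ℂ) * Complex.exp (θ₁ * Complex.I))
      (o + R * Complex.exp (θ₂ * Complex.I)) = 2 * R * Real.sin ((θ₂ - θ₁) / 2) :=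
    dist_circle o R hR.le θ₁ θ₂ (by linarith) (by linarith)
  have e3 : dist (o + (R:ℂ) * Complex.exp (θ₁ * Complex.I))
      (o + R * Complex.exp (θq * Complex.I)) = 2 * R * Real.sin ((θq - θ₁) / 2) :=
    dist_circle o R hR.le θ₁ θq (by linarith) (by linarith)
  have e4 : dist (o + (R:ℂ) * Complex.exp (θ * Complex.I))
      (o + R * Complex.exp (θ₂ * Complex.I)) = 2 * R * Real.sin ((θ₂ - θ) / 2) :=
    dist_circle o R hR.le θ θ₂ (by linarith) (by linarith)
  have e5 : dist (o + (R:ℂ) * Complex.exp (θ₂ * Complex.I))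
      (o + R * Complex.exp (θq * Complex.I)) = 2 * R * Real.sin ((θ₂ - θq) / 2) := by
    rw [dist_comm]
    exact dist_circle o R hR.le θq θ₂ (by linarith) (by linarith)
  have e6 : dist (o + (R:ℂ) * Complex.exp (θ * Complex.I))
      (o + R * Complex.exp (θ₁ * Complex.I)) = 2 * R * Real.sin ((θ₁ - θ) / 2) :=
    dist_circle o R hR.le θ θ₁ (by linarith) (by linarith)
  rw [e1, e2, e3, e4, e5, e6]
  set a := (θ₁ - θ) / 2
  set b := (θq - θ₁) / 2
  set c := (θ₂ - θq) / 2
  have ha : (θq - θ) / 2 = a + b := by simp [a, b]; ring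
  have hb : (θ₂ - θ₁) / 2 = b + c := by simp [b, c]; ring
  have hc : (θ₂ - θ) / 2 = a + b + c := by simp [a, b, c]; ring
  rw [ha, hb, hc, Real.sin_add, Real.sin_add (a+b) c, Real.sin_add a b,
    Real.cos_add a b, Real.sin_add b c]
  linear_combination (4 * R ^ 2 * Real.sin a * Real.sin c) * Real.sin_sq_add_cos_sq b
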